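/- arXiv:2505.20130 — 2 statements merged into one kernel-verified Lean document; each statement's English description precedes it below -/
import Mathlib

section
/- (Surrogate upper bound for first-order interference, Proposition 4.) Let Σ be symmetric with Σ^+_{ii'} = max(Σ_{ii'}, 0), let W be a symmetric 0-1 adjacency matrix with zero diagonal, and let (C_1, C_2) be a partition of {1,...,R}. Assume the decaying covariance condition: for any distinct i_1, i_2, i_3 with W_{i_1 i_2} = 1 and W_{i_1 i_3} = 0, one has Σ_{i_1 i_2} ≥ Σ_{i_1 i_3}. Define I_1 = Σ_{i∈C_1} Σ_{i'∈∂C_2} Σ_{ii'}·𝟙(N_{i'} ∩ C_1 ≠ ∅) + Σ_{i∈C_2} Σ_{i'∈∂C_1} Σ_{ii'}·𝟙(N_{i'} ∩ C_2 ≠ ∅), where N_{i'} = {ℓ : W_{ℓ i'} = 1} ∪ {i'} and ∂C_k is the set of i' ∈ C_k with N_{i'} ∩ (complement of C_k) ≠ ∅. Then I_1 ≤ R · Σ_{i∈C_1} Σ_{i'∈C_2} Σ^+_{ii'} W_{ii'}. -/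
open Finset
open scoped Classical

/-- Neighborhood of a region: itself together with all W-adjacent vertices. -/
noncomputable def nbr {R : ℕ} (W : Matrix (Fin R) (Fin R) ℝ) (j : Fin R) :
    Finset (Fin R) :=
  insert j (Finset.univ.filter fun ℓ => W ℓ j = 1)

/-- Boundary of a cluster: its vertices whose neighborhood leaves the cluster. -/
noncomputable def bdry {R : ℕ} (W : Matrix (Fin R) (Fin R) ℝ)
    (C : Finset (Fin R)) : Finset (Fin R) :=
  C.filter fun j => ((nbr W j) ∩ Cᶜ).Nonempty

/-- First-order interference term for a two-cluster partition (C₁, C₁ᶜ). -/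
noncomputable def I1fun {R : ℕ} (S W : Matrix (Fin R) (Fin R) ℝ)
    (C1 : Finset (Fin R)) : ℝ :=
  (∑ i ∈ C1, ∑ i' ∈ bdry W C1ᶜ,
      S i i' * (if ((nbr W i') ∩ C1).Nonempty then 1 else 0)) +
  (∑ i ∈ C1ᶜ, ∑ i' ∈ bdry W C1,
      S i i' * (if ((nbr W i') ∩ C1ᶜ).Nonempty then 1 else 0))


lemma key_stmt4 {R : ℕ} (S W : Matrix (Fin R) (Fin R) ℝ)
    (hS : S.IsSymm) (hW : W.IsSymm)
    (hW01 : ∀ i j, W i j = 0 ∨ W i j = 1)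
    (hdecay : ∀ i1 i2 i3 : Fin R, i1 ≠ i2 → i1 ≠ i3 → i2 ≠ i3 →
      W i1 i2 = 1 → W i1 i3 = 0 → S i1 i3 ≤ S i1 i2)
    (C : Finset (Fin R)) (i i' : Fin R) (hi : i ∈ C) (hi' : i' ∉ C)
    (h : ((nbr W i') ∩ C).Nonempty) :
    S i i' ≤ ∑ j ∈ C, max (S j i') 0 * W j i' := by
  obtain ⟨ℓ, hℓ⟩ := h
  rw [Finset.mem_inter] at hℓ
  obtain ⟨hℓn, hℓC⟩ := hℓ
  have hnn : ∀ j ∈ C, 0 ≤ max (S j i') 0 * W j i' := by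
    intro j _
    rcases hW01 j i' with h0 | h1
    · rw [h0, mul_zero]
    · rw [h1, mul_one]; exact le_max_right _ _
  have hℓne : ℓ ≠ i' := fun h => hi' (h ▸ hℓC)
  have hWℓ : W ℓ i' = 1 := by
    rw [nbr, Finset.mem_insert] at hℓn
    rcases hℓn with h | h
    · exact absurd h hℓne
    · exact (Finset.mem_filter.mp h).2
  rcases hW01 i i' with h0 | h1
  · have hii' : i ≠ i' := fun h => hi' (h ▸ hi)
    have hiℓ : i ≠ ℓ := by
      intro h; rw [h, hWℓ] at h0; exact one_ne_zero h0
    have hd : S i' i ≤ S i' ℓ :=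
      hdecay i' ℓ i (Ne.symm hℓne) (Ne.symm hii') (Ne.symm hiℓ)
        (by rw [← hW.apply]; exact hWℓ) (by rw [← hW.apply]; exact h0)
    have hb : S i i' ≤ max (S ℓ i') 0 * W ℓ i' := by
      rw [hWℓ, mul_one]
      calc S i i' = S i' i := by rw [hS.apply]
        _ ≤ S i' ℓ := hd
        _ = S ℓ i' := by rw [hS.apply]
        _ ≤ max (S ℓ i') 0 := le_max_left _ _
    exact hb.trans (Finset.single_le_sum hnn hℓC)
  · have hb : S i i' ≤ max (S i i') 0 * W i i' := by
      rw [h1, mul_one]; exact le_max_left _ _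
    exact hb.trans (Finset.single_le_sum hnn hi)

/-- Proposition 4: under decaying covariance,
I₁ ≤ R · ∑_{i∈C₁} ∑_{i'∈C₂} Σ⁺_{ii'} W_{ii'}. -/
theorem stmt4 (R : ℕ) (S W : Matrix (Fin R) (Fin R) ℝ)
    (hS : S.IsSymm) (hW : W.IsSymm)
    (hW01 : ∀ i j, W i j = 0 ∨ W i j = 1) (hWdiag : ∀ i, W i i = 0)
    (C1 : Finset (Fin R))
    (hdecay : ∀ i1 i2 i3 : Fin R, i1 ≠ i2 → i1 ≠ i3 → i2 ≠ i3 →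
      W i1 i2 = 1 → W i1 i3 = 0 → S i1 i3 ≤ S i1 i2) :
    I1fun S W C1 ≤ (R : ℝ) * ∑ i ∈ C1, ∑ i' ∈ C1ᶜ, max (S i i') 0 * W i i' := by
  set T : ℝ := ∑ i ∈ C1, ∑ i' ∈ C1ᶜ, max (S i i') 0 * W i i' with hT
  have hnn : ∀ a b : Fin R, 0 ≤ max (S a b) 0 * W a b := by
    intro a b
    rcases hW01 a b with h0 | h1
    · rw [h0, mul_zero]
    · rw [h1, mul_one]; exact le_max_right _ _
  have hT1 : T = ∑ i' ∈ C1ᶜ, ∑ j ∈ C1, max (S j i') 0 * W j i' := by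
    rw [hT, Finset.sum_comm]
  have hT2 : T = ∑ i' ∈ C1, ∑ j ∈ C1ᶜ, max (S j i') 0 * W j i' := by
    rw [hT]
    refine Finset.sum_congr rfl fun i hi => Finset.sum_congr rfl fun i' hi' => ?_
    rw [hS.apply, hW.apply]
  have hbd1 : bdry W C1ᶜ ⊆ C1ᶜ := Finset.filter_subset _ _
  have hbd2 : bdry W C1 ⊆ C1 := Finset.filter_subset _ _
  have hsum1 : ∀ i ∈ C1,
      (∑ i' ∈ bdry W C1ᶜ, S i i' * (if ((nbr W i') ∩ C1).Nonempty then 1 else 0)) ≤ T := by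
    intro i hi
    calc ∑ i' ∈ bdry W C1ᶜ, S i i' * (if ((nbr W i') ∩ C1).Nonempty then 1 else 0)
        ≤ ∑ i' ∈ bdry W C1ᶜ, ∑ j ∈ C1, max (S j i') 0 * W j i' := by
          refine Finset.sum_le_sum fun i' hi' => ?_
          by_cases hc : ((nbr W i') ∩ C1).Nonempty
          · rw [if_pos hc, mul_one]
            exact key_stmt4 S W hS hW hW01 hdecay C1 i i' hi
              (Finset.mem_compl.mp (hbd1 hi')) hc
          · rw [if_neg hc, mul_zero]
            exact Finset.sum_nonneg fun j _ => hnn j i'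
      _ ≤ ∑ i' ∈ C1ᶜ, ∑ j ∈ C1, max (S j i') 0 * W j i' := by
          refine Finset.sum_le_sum_of_subset_of_nonneg hbd1 fun i' _ _ => ?_
          exact Finset.sum_nonneg fun j _ => hnn j i'
      _ = T := hT1.symm
  have hsum2 : ∀ i ∈ C1ᶜ,
      (∑ i' ∈ bdry W C1, S i i' * (if ((nbr W i') ∩ C1ᶜ).Nonempty then 1 else 0)) ≤ T := by
    intro i hi
    calc ∑ i' ∈ bdry W C1, S i i' * (if ((nbr W i') ∩ C1ᶜ).Nonempty then 1 else 0)
        ≤ ∑ i' ∈ bdry W C1, ∑ j ∈ C1ᶜ, max (S j i') 0 * W j i' := by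
          refine Finset.sum_le_sum fun i' hi' => ?_
          by_cases hc : ((nbr W i') ∩ C1ᶜ).Nonempty
          · rw [if_pos hc, mul_one]
            refine key_stmt4 S W hS hW hW01 hdecay C1ᶜ i i' hi ?_ hc
            simp [Finset.mem_compl, hbd2 hi']
          · rw [if_neg hc, mul_zero]
            exact Finset.sum_nonneg fun j _ => hnn j i'
      _ ≤ ∑ i' ∈ C1, ∑ j ∈ C1ᶜ, max (S j i') 0 * W j i' := by
          refine Finset.sum_le_sum_of_subset_of_nonneg hbd2 fun i' _ _ => ?_
          exact Finset.sum_nonneg fun j _ => hnn j i'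
      _ = T := hT2.symm
  have hTnn : 0 ≤ T := Finset.sum_nonneg fun i _ => Finset.sum_nonneg fun i' _ => hnn i i'
  have h1 : (∑ i ∈ C1, ∑ i' ∈ bdry W C1ᶜ,
      S i i' * (if ((nbr W i') ∩ C1).Nonempty then 1 else 0)) ≤ (C1.card : ℝ) * T := by
    calc (∑ i ∈ C1, ∑ i' ∈ bdry W C1ᶜ,
        S i i' * (if ((nbr W i') ∩ C1).Nonempty then 1 else 0))
        ≤ ∑ _i ∈ C1, T := Finset.sum_le_sum hsum1
      _ = (C1.card : ℝ) * T := by rw [Finset.sum_const, nsmul_eq_mul]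
  have h2 : (∑ i ∈ C1ᶜ, ∑ i' ∈ bdry W C1,
      S i i' * (if ((nbr W i') ∩ C1ᶜ).Nonempty then 1 else 0)) ≤ (C1ᶜ.card : ℝ) * T := by
    calc (∑ i ∈ C1ᶜ, ∑ i' ∈ bdry W C1,
        S i i' * (if ((nbr W i') ∩ C1ᶜ).Nonempty then 1 else 0))
        ≤ ∑ _i ∈ C1ᶜ, T := Finset.sum_le_sum hsum2
      _ = (C1ᶜ.card : ℝ) * T := by rw [Finset.sum_const, nsmul_eq_mul]
  have hcard : (C1.card : ℝ) + (C1ᶜ.card : ℝ) = (R : ℝ) := by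
    rw [← Nat.cast_add, Finset.card_add_card_compl, Fintype.card_fin]
  calc I1fun S W C1 ≤ (C1.card : ℝ) * T + (C1ᶜ.card : ℝ) * T := add_le_add h1 h2
    _ = (R : ℝ) * T := by rw [← add_mul, hcard]
end

section
/- (Tightness of the surrogate, Proposition 5.) With the setup of the previous statement, suppose additionally that min_{i,i'} Σ_{ii'} = ε > 0. Let d_max = max_{i'} |{ℓ : W_{ℓ i'} = 1}| and σ = (max_{i≠i'} Σ_{ii'}) / (min_{i,i'} Σ_{ii'}). Then R · Σ_{i∈C_1} Σ_{i'∈C_2} Σ^+_{ii'} W_{ii'} ≤ d_max · σ · I_1, where I_1 = Σ_{i∈C_1} Σ_{i'∈∂C_2} Σ_{ii'}·𝟙(N_{i'} ∩ C_1 ≠ ∅) + Σ_{i∈C_2} Σ_{i'∈∂C_1} Σ_{ii'}·𝟙(N_{i'} ∩ C_2 ≠ ∅). -/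
open Finset
open scoped Classical

/-- Proposition 5, tightness: with strictly positive Σ,
R · ∑ Σ⁺ W ≤ d_max · σ · I₁ where σ = max_{i≠i'}Σ_{ii'} / min_{i,i'}Σ_{ii'}. -/
theorem stmt5 (R : ℕ) (S W : Matrix (Fin R) (Fin R) ℝ)
    (hS : S.IsSymm) (hW : W.IsSymm)
    (hW01 : ∀ i j, W i j = 0 ∨ W i j = 1) (hWdiag : ∀ i, W i i = 0)
    (C1 : Finset (Fin R))
    (hdecay : ∀ i1 i2 i3 : Fin R, i1 ≠ i2 → i1 ≠ i3 → i2 ≠ i3 →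
      W i1 i2 = 1 → W i1 i3 = 0 → S i1 i3 ≤ S i1 i2)
    (hpos : ∀ i i', 0 < S i i')
    (a b : ℝ)
    (ha : IsGreatest {x : ℝ | ∃ i i' : Fin R, i ≠ i' ∧ S i i' = x} a)
    (hb : IsLeast {x : ℝ | ∃ i i' : Fin R, S i i' = x} b) :
    (R : ℝ) * (∑ i ∈ C1, ∑ i' ∈ C1ᶜ, max (S i i') 0 * W i i') ≤
      ((Finset.univ.sup fun j : Fin R =>
        (Finset.univ.filter fun ℓ => W ℓ j = 1).card : ℕ) : ℝ) *
      (a / b) * I1fun S W C1 := by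
  classical
  obtain ⟨⟨ia, ia', hane, haeq⟩, hub⟩ := ha
  obtain ⟨⟨ib, ib', hbeq⟩, hlb⟩ := hb
  have hble : ∀ i i', b ≤ S i i' := fun i i' => hlb ⟨i, i', rfl⟩
  have haub : ∀ i i', i ≠ i' → S i i' ≤ a := fun i i' h => hub ⟨i, i', h, rfl⟩
  have hbpos : 0 < b := hbeq ▸ hpos ib ib'
  have hapos : 0 < a := lt_of_lt_of_le hbpos (haeq ▸ hble ia ia')
  set d : ℕ := Finset.univ.sup
    (fun j : Fin R => (Finset.univ.filter fun ℓ => W ℓ j = 1).card) with hd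
  have hdle : ∀ j : Fin R, (Finset.univ.filter fun ℓ => W ℓ j = 1).card ≤ d :=
    fun j => by rw [hd]; exact Finset.le_sup (f := fun j : Fin R => (Finset.univ.filter fun ℓ => W ℓ j = 1).card) (Finset.mem_univ j)
  have hmemnbr : ∀ i j : Fin R, W i j = 1 → i ∈ nbr W j := by
    intro i j h
    simp [nbr, h]
  -- replace max with S
  have hLHS : (∑ i ∈ C1, ∑ i' ∈ C1ᶜ, max (S i i') 0 * W i i')
      = ∑ i ∈ C1, ∑ i' ∈ C1ᶜ, S i i' * W i i' := by
    refine Finset.sum_congr rfl fun i _ => Finset.sum_congr rfl fun i' _ => ?_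
    rw [max_eq_left (hpos i i').le]
  set T : ℝ := ∑ i ∈ C1, ∑ i' ∈ C1ᶜ, S i i' * W i i' with hT
  -- membership in boundaries for crossing edges
  have hbd2 : ∀ i ∈ C1, ∀ i' ∈ C1ᶜ, W i i' = 1 → i' ∈ bdry W C1ᶜ := by
    intro i hi i' hi' h
    refine Finset.mem_filter.2 ⟨hi', ⟨i, Finset.mem_inter.2 ⟨hmemnbr i i' h, ?_⟩⟩⟩
    simpa using hi
  have hbd1 : ∀ i ∈ C1, ∀ i' ∈ C1ᶜ, W i i' = 1 → i ∈ bdry W C1 := by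
    intro i hi i' hi' h
    have h' : W i' i = 1 := by rw [hW.apply]; exact h
    exact Finset.mem_filter.2 ⟨hi, ⟨i', Finset.mem_inter.2 ⟨hmemnbr i' i h', hi'⟩⟩⟩
  -- inner sum bounds
  have hinner1 : ∀ i' : Fin R, ∑ i ∈ C1, S i i' * W i i' ≤ a * d := by
    intro i'
    have h1 : ∑ i ∈ C1, S i i' * W i i'
        = ∑ i ∈ C1.filter (fun i => W i i' = 1), S i i' * W i i' := by
      refine (Finset.sum_filter_of_ne ?_).symm
      intro i _ h
      rcases hW01 i i' with h0 | h1
      · exfalso; apply h; rw [h0, mul_zero]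
      · exact h1
    rw [h1]
    calc ∑ i ∈ C1.filter (fun i => W i i' = 1), S i i' * W i i'
        ≤ ∑ _i ∈ C1.filter (fun i => W i i' = 1), a := by
          refine Finset.sum_le_sum fun i hi => ?_
          have hw := (Finset.mem_filter.1 hi).2
          have hne : i ≠ i' := by
            intro he; rw [he, hWdiag] at hw; norm_num at hw
          rw [hw, mul_one]; exact haub i i' hne
      _ = (C1.filter (fun i => W i i' = 1)).card * a := by
          rw [Finset.sum_const, nsmul_eq_mul]
      _ ≤ d * a := by
          refine mul_le_mul_of_nonneg_right ?_ hapos.le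
          have : (C1.filter (fun i => W i i' = 1)).card
              ≤ (Finset.univ.filter fun ℓ => W ℓ i' = 1).card := by
            apply Finset.card_le_card
            intro x hx
            exact Finset.mem_filter.2 ⟨Finset.mem_univ x, (Finset.mem_filter.1 hx).2⟩
          exact_mod_cast le_trans this (hdle i')
      _ = a * d := mul_comm _ _
  have hinner2 : ∀ i : Fin R, ∑ i' ∈ C1ᶜ, S i i' * W i i' ≤ a * d := by
    intro i
    have h1 : ∑ i' ∈ C1ᶜ, S i i' * W i i'
        = ∑ i' ∈ C1ᶜ.filter (fun i' => W i i' = 1), S i i' * W i i' := by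
      refine (Finset.sum_filter_of_ne ?_).symm
      intro i' _ h
      rcases hW01 i i' with h0 | h1
      · exfalso; apply h; rw [h0, mul_zero]
      · exact h1
    rw [h1]
    calc ∑ i' ∈ C1ᶜ.filter (fun i' => W i i' = 1), S i i' * W i i'
        ≤ ∑ _i' ∈ C1ᶜ.filter (fun i' => W i i' = 1), a := by
          refine Finset.sum_le_sum fun i' hi' => ?_
          have hw := (Finset.mem_filter.1 hi').2
          have hne : i ≠ i' := by
            intro he; rw [he, hWdiag] at hw; norm_num at hw
          rw [hw, mul_one]; exact haub i i' hne
      _ = (C1ᶜ.filter (fun i' => W i i' = 1)).card * a := by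
          rw [Finset.sum_const, nsmul_eq_mul]
      _ ≤ d * a := by
          refine mul_le_mul_of_nonneg_right ?_ hapos.le
          have : (C1ᶜ.filter (fun i' => W i i' = 1)).card
              ≤ (Finset.univ.filter fun ℓ => W ℓ i = 1).card := by
            apply Finset.card_le_card
            intro x hx
            refine Finset.mem_filter.2 ⟨Finset.mem_univ x, ?_⟩
            rw [hW.apply]; exact (Finset.mem_filter.1 hx).2
          exact_mod_cast le_trans this (hdle i)
      _ = a * d := mul_comm _ _
  -- Claim A : T ≤ a * d * |∂(C1ᶜ)|
  have hA : T ≤ a * d * (bdry W C1ᶜ).card := by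
    have hswap : T = ∑ i' ∈ C1ᶜ, ∑ i ∈ C1, S i i' * W i i' := Finset.sum_comm
    have hzero : ∀ i' ∈ C1ᶜ, i' ∉ bdry W C1ᶜ → ∑ i ∈ C1, S i i' * W i i' = 0 := by
      intro i' hi' hnb
      refine Finset.sum_eq_zero fun i hi => ?_
      rcases hW01 i i' with h0 | h1
      · rw [h0, mul_zero]
      · exact absurd (hbd2 i hi i' hi' h1) hnb
    have hsub : bdry W C1ᶜ ⊆ C1ᶜ := Finset.filter_subset _ _
    rw [hswap, ← Finset.sum_subset hsub hzero]
    calc ∑ i' ∈ bdry W C1ᶜ, ∑ i ∈ C1, S i i' * W i i'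
        ≤ ∑ _i' ∈ bdry W C1ᶜ, a * d := Finset.sum_le_sum fun i' _ => hinner1 i'
      _ = (bdry W C1ᶜ).card * (a * d) := by rw [Finset.sum_const, nsmul_eq_mul]
      _ = a * d * (bdry W C1ᶜ).card := by ring
  -- Claim B : T ≤ a * d * |∂C1|
  have hB : T ≤ a * d * (bdry W C1).card := by
    have hzero : ∀ i ∈ C1, i ∉ bdry W C1 → ∑ i' ∈ C1ᶜ, S i i' * W i i' = 0 := by
      intro i hi hnb
      refine Finset.sum_eq_zero fun i' hi' => ?_
      rcases hW01 i i' with h0 | h1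
      · rw [h0, mul_zero]
      · exact absurd (hbd1 i hi i' hi' h1) hnb
    have hsub : bdry W C1 ⊆ C1 := Finset.filter_subset _ _
    rw [hT, ← Finset.sum_subset hsub hzero]
    calc ∑ i ∈ bdry W C1, ∑ i' ∈ C1ᶜ, S i i' * W i i'
        ≤ ∑ _i ∈ bdry W C1, a * d := Finset.sum_le_sum fun i _ => hinner2 i
      _ = (bdry W C1).card * (a * d) := by rw [Finset.sum_const, nsmul_eq_mul]
      _ = a * d * (bdry W C1).card := by ring
  -- Claim C : lower bound on I1
  have hC : b * ((C1.card : ℝ) * (bdry W C1ᶜ).card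
      + (C1ᶜ.card : ℝ) * (bdry W C1).card) ≤ I1fun S W C1 := by
    have h1 : (C1.card : ℝ) * (bdry W C1ᶜ).card * b
        ≤ ∑ i ∈ C1, ∑ i' ∈ bdry W C1ᶜ,
            S i i' * (if ((nbr W i') ∩ C1).Nonempty then 1 else 0) := by
      have : ∀ i ∈ C1, ∀ i' ∈ bdry W C1ᶜ,
          b ≤ S i i' * (if ((nbr W i') ∩ C1).Nonempty then 1 else 0) := by
        intro i _ i' hi'
        have hnon : ((nbr W i') ∩ C1).Nonempty := by
          have := (Finset.mem_filter.1 hi').2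
          simpa using this
        rw [if_pos hnon, mul_one]; exact hble i i'
      calc (C1.card : ℝ) * (bdry W C1ᶜ).card * b
          = ∑ _i ∈ C1, ∑ _i' ∈ bdry W C1ᶜ, b := by
            rw [Finset.sum_const, Finset.sum_const, nsmul_eq_mul, nsmul_eq_mul]; ring
        _ ≤ _ := Finset.sum_le_sum fun i hi =>
            Finset.sum_le_sum fun i' hi' => this i hi i' hi'
    have h2 : (C1ᶜ.card : ℝ) * (bdry W C1).card * b
        ≤ ∑ i ∈ C1ᶜ, ∑ i' ∈ bdry W C1,
            S i i' * (if ((nbr W i') ∩ C1ᶜ).Nonempty then 1 else 0) := by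
      have : ∀ i ∈ C1ᶜ, ∀ i' ∈ bdry W C1,
          b ≤ S i i' * (if ((nbr W i') ∩ C1ᶜ).Nonempty then 1 else 0) := by
        intro i _ i' hi'
        have hnon : ((nbr W i') ∩ C1ᶜ).Nonempty := (Finset.mem_filter.1 hi').2
        rw [if_pos hnon, mul_one]; exact hble i i'
      calc (C1ᶜ.card : ℝ) * (bdry W C1).card * b
          = ∑ _i ∈ C1ᶜ, ∑ _i' ∈ bdry W C1, b := by
            rw [Finset.sum_const, Finset.sum_const, nsmul_eq_mul, nsmul_eq_mul]; ring
        _ ≤ _ := Finset.sum_le_sum fun i hi =>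
            Finset.sum_le_sum fun i' hi' => this i hi i' hi'
    have := add_le_add h1 h2
    rw [I1fun]; nlinarith [this]
  -- combine
  have hcardR : (C1.card : ℝ) + (C1ᶜ.card : ℝ) = R := by
    have := Finset.card_add_card_compl C1
    rw [Fintype.card_fin] at this
    exact_mod_cast this
  set X : ℝ := (C1.card : ℝ) * (bdry W C1ᶜ).card + (C1ᶜ.card : ℝ) * (bdry W C1).card
    with hX
  have hXnn : 0 ≤ X := by positivity
  have h1 : (R : ℝ) * T ≤ a * d * X := by
    have hc1 : (C1.card : ℝ) * T ≤ (C1.card : ℝ) * (a * d * (bdry W C1ᶜ).card) :=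
      mul_le_mul_of_nonneg_left hA (by positivity)
    have hc2 : (C1ᶜ.card : ℝ) * T ≤ (C1ᶜ.card : ℝ) * (a * d * (bdry W C1).card) :=
      mul_le_mul_of_nonneg_left hB (by positivity)
    calc (R : ℝ) * T = (C1.card : ℝ) * T + (C1ᶜ.card : ℝ) * T := by
          rw [← hcardR]; ring
      _ ≤ (C1.card : ℝ) * (a * d * (bdry W C1ᶜ).card)
          + (C1ᶜ.card : ℝ) * (a * d * (bdry W C1).card) := add_le_add hc1 hc2
      _ = a * d * X := by rw [hX]; ring
  have h2 : a * d * X ≤ (d : ℝ) * (a / b) * I1fun S W C1 := by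
    have hXle : X ≤ I1fun S W C1 / b := (le_div_iff₀ hbpos).2 (by nlinarith [hC])
    calc a * d * X ≤ a * d * (I1fun S W C1 / b) :=
          mul_le_mul_of_nonneg_left hXle (by positivity)
      _ = (d : ℝ) * (a / b) * I1fun S W C1 := by ring
  rw [hLHS]
  exact le_trans h1 h2
end
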